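/- Let α ∈ (−1, −1/2) be fixed and set k_α := 2^{α−1/2}·|α+1/2|·Γ(α+1)/(√π·Γ(α+3/2)) and K_α := Γ(α+1)/(√π·Γ(α+3/2)). Then for every u ∈ (−1,1), k_α·|u|·(1−|u|)^{α+1/2} ≤ |Π_α(u)| ≤ K_α·|u|·(1−|u|)^{α+1/2}. -/

import Mathlib

open Real

/-- The function `Π_α(u)` for `α ∈ (-1, -1/2)`. -/
noncomputable def PiFun (α u : ℝ) : ℝ :=
  Real.Gamma (α + 1) / (Real.sqrt π * Real.Gamma (α + 1/2)) *
    ∫ w in (0 : ℝ)..u, (1 - w ^ 2) ^ (α - 1/2)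

lemma integral_one_sub_rpow (α u : ℝ) (h1 : u < 1) (hne : α ≠ -1/2) :
    (∫ w in (0:ℝ)..u, (1 - w) ^ (α - 1/2)) =
      (1 - (1 - u) ^ (α + 1/2)) / (α + 1/2) := by
  have h := intervalIntegral.integral_comp_sub_left (a := (0:ℝ)) (b := u)
    (fun x => x ^ (α - 1/2)) 1
  rw [show (1:ℝ) - 0 = 1 by ring] at h
  rw [h, integral_rpow (Or.inr ⟨by intro hc; apply hne; linarith, by
    intro hmem
    rw [Set.mem_uIcc] at hmem
    rcases hmem with ⟨h1', _⟩ | ⟨_, h2'⟩ <;> linarith⟩)]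
  rw [Real.one_rpow, show α - 1/2 + 1 = α + 1/2 by ring]

lemma key_bounds (α : ℝ) (hα : α ∈ Set.Ioo (-1 : ℝ) (-1/2))
    (u : ℝ) (h0 : 0 ≤ u) (h1 : u < 1) :
    2 ^ (α - 1/2) * (u * (1 - u) ^ (α + 1/2)) ≤
      (∫ w in (0:ℝ)..u, (1 - w ^ 2) ^ (α - 1/2)) ∧
    (∫ w in (0:ℝ)..u, (1 - w ^ 2) ^ (α - 1/2)) ≤
      (u * (1 - u) ^ (α + 1/2)) * (-(α + 1/2))⁻¹ := by
  obtain ⟨hα1, hα2⟩ := hα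
  set β : ℝ := -(α + 1/2) with hβdef
  have hβ0 : 0 < β := by simp [hβdef]; linarith
  have hβ1 : β ≤ 1 := by simp [hβdef]; linarith
  have ht0 : 0 < 1 - u := by linarith
  set t : ℝ := 1 - u with htdef
  set s : ℝ := t ^ β with hsdef
  have hs0 : 0 < s := Real.rpow_pos_of_pos ht0 β
  have hts : t ≤ s := by
    have := Real.rpow_le_rpow_of_exponent_ge ht0 (by linarith) hβ1
    rwa [Real.rpow_one] at this
  -- Bernoulli: s ≤ 1 - β * u
  have hBer : s ≤ 1 - β * u := by
    have := Real.geom_mean_le_arith_mean2_weighted hβ0.le (by linarith : (0:ℝ) ≤ 1 - β)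
      ht0.le (zero_le_one) (by ring)
    rw [Real.one_rpow, mul_one] at this
    calc s ≤ β * t + (1 - β) * 1 := this
    _ = 1 - β * u := by rw [htdef]; ring
  -- (1-u)^(α+1/2) = s⁻¹
  have hpow : (1 - u) ^ (α + 1/2) = s⁻¹ := by
    rw [hsdef, ← htdef, ← Real.rpow_neg ht0.le, hβdef, neg_neg]
  have hane : α + 1/2 ≠ 0 := by intro hc; linarith
  -- value of the comparison integral
  have hval : (∫ w in (0:ℝ)..u, (1 - w) ^ (α - 1/2)) = (s⁻¹ - 1) / β := by
    rw [integral_one_sub_rpow α u h1 (by intro hc; linarith), hpow, hβdef, div_neg, ← neg_div]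
    ring_nf
  -- integrability
  have hcont : ContinuousOn (fun w : ℝ => (1 - w ^ 2) ^ (α - 1/2)) (Set.uIcc 0 u) := by
    apply ContinuousOn.rpow_const
    · fun_prop
    · intro x hx
      rw [Set.uIcc_of_le h0, Set.mem_Icc] at hx
      left
      nlinarith [hx.1, hx.2]
  have hcont2 : ContinuousOn (fun w : ℝ => (1 - w) ^ (α - 1/2)) (Set.uIcc 0 u) := by
    apply ContinuousOn.rpow_const
    · fun_prop
    · intro x hx
      rw [Set.uIcc_of_le h0, Set.mem_Icc] at hx
      left; linarith [hx.2]
  have hint : IntervalIntegrable (fun w : ℝ => (1 - w ^ 2) ^ (α - 1/2)) MeasureTheory.volume 0 u :=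
    hcont.intervalIntegrable
  have hint2 : IntervalIntegrable (fun w : ℝ => (1 - w) ^ (α - 1/2)) MeasureTheory.volume 0 u :=
    hcont2.intervalIntegrable
  have hp0 : α - 1/2 ≤ 0 := by linarith
  constructor
  · -- lower bound
    have hmono : (∫ w in (0:ℝ)..u, 2 ^ (α - 1/2) * (1 - w) ^ (α - 1/2)) ≤
        (∫ w in (0:ℝ)..u, (1 - w ^ 2) ^ (α - 1/2)) := by
      apply intervalIntegral.integral_mono_on h0 (hint2.const_mul _) hint
      intro x hx
      rw [Set.mem_Icc] at hx
      have hx1 : 0 < 1 - x := by linarith [hx.2]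
      have hx2 : 0 < 1 - x ^ 2 := by nlinarith [hx.1, hx.2]
      have h2x : 1 - x ^ 2 ≤ 2 * (1 - x) := by nlinarith [hx.1]
      calc 2 ^ (α - 1/2) * (1 - x) ^ (α - 1/2)
          = (2 * (1 - x)) ^ (α - 1/2) := by
            rw [Real.mul_rpow (by norm_num) hx1.le]
        _ ≤ (1 - x ^ 2) ^ (α - 1/2) := Real.rpow_le_rpow_of_nonpos hx2 h2x hp0
    rw [intervalIntegral.integral_const_mul, hval] at hmono
    refine le_trans ?_ hmono
    apply mul_le_mul_of_nonneg_left _ (Real.rpow_nonneg (by norm_num) _)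
    -- u * (1-u)^(α+1/2) ≤ (s⁻¹ - 1)/β
    rw [hpow, le_div_iff₀ hβ0]
    have hss : s * s⁻¹ = 1 := mul_inv_cancel₀ hs0.ne'
    nlinarith [mul_le_mul_of_nonneg_left hBer (le_of_lt (inv_pos.mpr hs0))]
  · -- upper bound
    have hmono : (∫ w in (0:ℝ)..u, (1 - w ^ 2) ^ (α - 1/2)) ≤
        (∫ w in (0:ℝ)..u, (1 - w) ^ (α - 1/2)) := by
      apply intervalIntegral.integral_mono_on h0 hint hint2
      intro x hx
      rw [Set.mem_Icc] at hx
      have hx1 : 0 < 1 - x := by linarith [hx.2]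
      have hle : 1 - x ≤ 1 - x ^ 2 := by nlinarith [hx.1, hx.2]
      exact Real.rpow_le_rpow_of_nonpos hx1 hle hp0
    rw [hval] at hmono
    refine hmono.trans ?_
    rw [hpow, div_eq_mul_inv]
    apply mul_le_mul_of_nonneg_right _ (le_of_lt (inv_pos.mpr hβ0))
    have hss : s * s⁻¹ = 1 := mul_inv_cancel₀ hs0.ne'
    nlinarith [mul_le_mul_of_nonneg_left hts (le_of_lt (inv_pos.mpr hs0))]

lemma aux2 (T A S G a : ℝ) (hS : S ≠ 0) (hG : G ≠ 0) (ha : a ≠ 0) :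
    T * -a * A / (S * (a * G)) = -(A / (S * G)) * T := by
  field_simp

lemma aux1 (X A S G a : ℝ) (hS : S ≠ 0) (hG : G ≠ 0) (ha : a ≠ 0) :
    -(A / (S * G)) * (X * (-a)⁻¹) = A / (S * (a * G)) * X := by
  have hna : -a ≠ 0 := neg_ne_zero.mpr ha
  field_simp

theorem PiFun_pointwise_bounds (α : ℝ) (hα : α ∈ Set.Ioo (-1 : ℝ) (-1/2))
    (u : ℝ) (hu : u ∈ Set.Ioo (-1 : ℝ) 1) :
    2 ^ (α - 1/2) * |α + 1/2| * Real.Gamma (α + 1) / (Real.sqrt π * Real.Gamma (α + 3/2)) *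
        (|u| * (1 - |u|) ^ (α + 1/2)) ≤ |PiFun α u| ∧
    |PiFun α u| ≤
      Real.Gamma (α + 1) / (Real.sqrt π * Real.Gamma (α + 3/2)) *
        (|u| * (1 - |u|) ^ (α + 1/2)) := by
  obtain ⟨hα1, hα2⟩ := hα
  obtain ⟨hu1, hu2⟩ := hu
  have habs0 : 0 ≤ |u| := abs_nonneg u
  have habs1 : |u| < 1 := abs_lt.mpr ⟨hu1, hu2⟩
  obtain ⟨hlow, hhigh⟩ := key_bounds α ⟨hα1, hα2⟩ |u| habs0 habs1
  -- the integral for |u| is nonnegative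
  have h1abs : (0:ℝ) ≤ 1 - |u| := by linarith
  have hInonneg : 0 ≤ ∫ w in (0:ℝ)..|u|, (1 - w ^ 2) ^ (α - 1/2) := by
    refine le_trans ?_ hlow
    exact mul_nonneg (Real.rpow_nonneg (by norm_num) _)
      (mul_nonneg habs0 (Real.rpow_nonneg h1abs _))
  -- |∫_0^u f| = ∫_0^{|u|} f
  have habsint : |∫ w in (0:ℝ)..u, (1 - w ^ 2) ^ (α - 1/2)| =
      ∫ w in (0:ℝ)..|u|, (1 - w ^ 2) ^ (α - 1/2) := by
    rcases le_or_gt 0 u with h | h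
    · rw [abs_of_nonneg h, abs_of_nonneg]
      rw [← abs_of_nonneg h]
      exact hInonneg
    · have heven : (∫ w in (0:ℝ)..(-u), (1 - w ^ 2) ^ (α - 1/2)) =
          ∫ w in (0:ℝ)..(-u), (1 - (-w) ^ 2) ^ (α - 1/2) := by
        simp [neg_pow]
      have hcomp := intervalIntegral.integral_comp_neg
        (a := (0:ℝ)) (b := -u) (fun x => (1 - x ^ 2) ^ (α - 1/2))
      have heq : (∫ w in (0:ℝ)..(-u), (1 - w ^ 2) ^ (α - 1/2)) =
          -∫ w in (0:ℝ)..u, (1 - w ^ 2) ^ (α - 1/2) := by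
        rw [heven, hcomp, neg_neg, neg_zero, intervalIntegral.integral_symm]
      rw [abs_of_neg h] at hInonneg
      rw [heq] at hInonneg
      rw [abs_of_neg h, heq, abs_of_nonpos (by linarith)]
  -- Gamma facts
  have hπ : 0 < Real.sqrt π := Real.sqrt_pos.mpr Real.pi_pos
  have hG1 : 0 < Real.Gamma (α + 1) := Real.Gamma_pos_of_pos (by linarith)
  have hane : α + 1/2 ≠ 0 := by intro hc; linarith
  have hG3eq : Real.Gamma (α + 3/2) = (α + 1/2) * Real.Gamma (α + 1/2) := by
    have := Real.Gamma_add_one hane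
    rw [show α + 1/2 + 1 = α + 3/2 by ring] at this
    exact this
  have hG3pos : 0 < Real.Gamma (α + 3/2) := Real.Gamma_pos_of_pos (by linarith)
  have hG2neg : Real.Gamma (α + 1/2) < 0 := by
    rcases lt_trichotomy (Real.Gamma (α + 1/2)) 0 with h | h | h
    · exact h
    · rw [hG3eq, h, mul_zero] at hG3pos; linarith
    · nlinarith [hG3eq]
  -- |PiFun| = (-c) * ∫_0^{|u|}
  have hc : Real.Gamma (α + 1) / (Real.sqrt π * Real.Gamma (α + 1/2)) < 0 := by
    apply div_neg_of_pos_of_neg hG1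
    exact mul_neg_of_pos_of_neg hπ hG2neg
  have hPi : |PiFun α u| = (-(Real.Gamma (α + 1) / (Real.sqrt π * Real.Gamma (α + 1/2)))) *
      ∫ w in (0:ℝ)..|u|, (1 - w ^ 2) ^ (α - 1/2) := by
    rw [PiFun, abs_mul, habsint, abs_of_neg hc]
  have hGne : Real.Gamma (α + 1/2) ≠ 0 := ne_of_lt hG2neg
  constructor
  · rw [hPi]
    refine le_trans ?_ (mul_le_mul_of_nonneg_left hlow (by linarith))
    have : 2 ^ (α - 1/2) * |α + 1/2| * Real.Gamma (α + 1) / (Real.sqrt π * Real.Gamma (α + 3/2)) =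
        -(Real.Gamma (α + 1) / (Real.sqrt π * Real.Gamma (α + 1/2))) * 2 ^ (α - 1/2) := by
      rw [hG3eq, abs_of_neg (by linarith : α + 1/2 < 0)]
      exact aux2 _ _ _ _ _ hπ.ne' hGne hane
    rw [this, mul_assoc]
  · rw [hPi]
    refine le_trans (mul_le_mul_of_nonneg_left hhigh (by linarith)) ?_
    have : -(Real.Gamma (α + 1) / (Real.sqrt π * Real.Gamma (α + 1/2))) *
        ((|u| * (1 - |u|) ^ (α + 1/2)) * (-(α + 1/2))⁻¹) =
        Real.Gamma (α + 1) / (Real.sqrt π * Real.Gamma (α + 3/2)) *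
          (|u| * (1 - |u|) ^ (α + 1/2)) := by
      rw [hG3eq]
      exact aux1 _ _ _ _ _ hπ.ne' hGne hane
    rw [this]
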